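/- For every n ≥ 3, if A, B, C are distinct geometric hyperplanes of the incidence geometry G_n with A ∩ B ⊆ C, then A ∩ B = A ∩ C; consequently G_n has Veldkamp lines. -/

import Mathlib

/-- The symplectic vector space `V_n = (ZMod 2)^(2n)` of the n-qubit real Pauli group. -/
abbrev V (n : ℕ) : Type := Fin (2 * n) → ZMod 2

/-- The index `2i-1` (0-based: `2i`). -/
def i0 {n : ℕ} (i : Fin n) : Fin (2 * n) := ⟨2 * i.1, by have := i.isLt; omega⟩

/-- The index `2i` (0-based: `2i+1`). -/
def i1 {n : ℕ} (i : Fin n) : Fin (2 * n) := ⟨2 * i.1 + 1, by have := i.isLt; omega⟩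

/-- The symplectic form `⟨x,y⟩ = Σ_{i=1}^n (x_{2i−1} y_{2i} + x_{2i} y_{2i−1})`. -/
def sform {n : ℕ} (x y : V n) : ZMod 2 :=
  ∑ i : Fin n, (x (i0 i) * y (i1 i) + x (i1 i) * y (i0 i))

/-- The point set `P = V_n \ {0}` of the incidence geometry `G_n`. -/
def P (n : ℕ) : Set (V n) := {x | x ≠ 0}

/-- The line set `L = {{a,b,a+b} : a,b ∈ P, a ≠ b, ⟨a,b⟩ = 0}` of `G_n`. -/
def Lines (n : ℕ) : Set (Set (V n)) :=
  {l | ∃ a b : V n, a ∈ P n ∧ b ∈ P n ∧ a ≠ b ∧ sform a b = 0 ∧ l = {a, b, a + b}}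

/-- A subset `H ⊆ P` satisfies condition (H1) if every line meets it in exactly
one point or is contained in it. -/
def IsH1 {n : ℕ} (H : Set (V n)) : Prop :=
  H ⊆ P n ∧ ∀ l ∈ Lines n, (H ∩ l).ncard = 1 ∨ l ⊆ H

/-- A geometric hyperplane: a subset satisfying (H1) which is not the full point set. -/
def IsHyperplane {n : ℕ} (H : Set (V n)) : Prop := IsH1 H ∧ H ≠ P n

/-- `A ⊞ B`: the complement in `P` of the symmetric difference of `A` and `B`. -/
def boxAdd {n : ℕ} (A B : Set (V n)) : Set (V n) := P n \ (symmDiff A B)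

/-- The quadratic form `Q_0(x) = Σ_{i=1}^n x_{2i−1} x_{2i}`. -/
def Q0 {n : ℕ} (x : V n) : ZMod 2 := ∑ i : Fin n, x (i0 i) * x (i1 i)

/-- The quadratic form `Q_p(x) = Q_0(x) + ⟨p,x⟩`. -/
def Qf {n : ℕ} (p x : V n) : ZMod 2 := Q0 x + sform p x

/-- The perp-set hyperplane `C_p = {x ∈ P : ⟨p,x⟩ = 0}`. -/
def Cset {n : ℕ} (p : V n) : Set (V n) := {x ∈ P n | sform p x = 0}

/-- The quadric hyperplane `H_p = {x ∈ P : Q_p(x) = 0}`. -/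
def Hset {n : ℕ} (p : V n) : Set (V n) := {x ∈ P n | Qf p x = 0}

/-- The symplectic transvection `t_p : x ↦ x + ⟨p,x⟩·p`. -/
def tv {n : ℕ} (p : V n) (x : V n) : V n := x + sform p x • p


section Basic
variable {n : ℕ}

lemma zadd_self : ∀ a : ZMod 2, a + a = 0 := by decide

lemma zcases : ∀ a : ZMod 2, a = 0 ∨ a = 1 := by decide

lemma Vadd_self (x : V n) : x + x = 0 := by
  funext j; exact zadd_self (x j)

lemma sform_comm (x y : V n) : sform x y = sform y x := by
  unfold sform; apply Finset.sum_congr rfl; intro i _; ring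

lemma sform_self (x : V n) : sform x x = 0 := by
  unfold sform
  rw [Finset.sum_eq_zero]
  intro i _
  have : ∀ a b : ZMod 2, a * b + b * a = 0 := by decide
  exact this _ _

lemma sform_add_right (q x y : V n) : sform q (x + y) = sform q x + sform q y := by
  unfold sform
  rw [← Finset.sum_add_distrib]
  apply Finset.sum_congr rfl; intro i _
  simp only [Pi.add_apply]; ring

lemma sform_add_left (q q' x : V n) : sform (q + q') x = sform q x + sform q' x := by
  unfold sform
  rw [← Finset.sum_add_distrib]
  apply Finset.sum_congr rfl; intro i _
  simp only [Pi.add_apply]; ring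

lemma sform_zero_right (q : V n) : sform q 0 = 0 := by
  unfold sform; rw [Finset.sum_eq_zero]; intro i _; simp

lemma Q0_zero : Q0 (0 : V n) = 0 := by
  unfold Q0; rw [Finset.sum_eq_zero]; intro i _; simp

lemma Q0_add (x y : V n) : Q0 (x + y) = Q0 x + Q0 y + sform x y := by
  unfold Q0 sform
  rw [← Finset.sum_add_distrib, ← Finset.sum_add_distrib]
  apply Finset.sum_congr rfl; intro i _
  simp only [Pi.add_apply]; ring

/-- The equiv `Fin n × Fin 2 ≃ Fin (2*n)`. -/
def pairEquiv (n : ℕ) : Fin n × Fin 2 ≃ Fin (2 * n) where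
  toFun := fun p => ⟨2 * p.1.1 + p.2.1, by have := p.1.isLt; have := p.2.isLt; omega⟩
  invFun := fun j => (⟨j.1 / 2, by have := j.isLt; omega⟩, ⟨j.1 % 2, by omega⟩)
  left_inv := by
    rintro ⟨i, b⟩
    have hb := b.isLt
    refine Prod.ext (Fin.ext ?_) (Fin.ext ?_) <;> simp <;> omega
  right_inv := by
    intro j
    apply Fin.ext; simp; omega

lemma sum_split {M : Type*} [AddCommMonoid M] (F : Fin (2 * n) → M) :
    ∑ j, F j = ∑ i : Fin n, (F (i0 i) + F (i1 i)) := by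
  rw [← Fintype.sum_equiv (pairEquiv n) (fun p => F (pairEquiv n p)) F (fun p => rfl)]
  rw [Fintype.sum_prod_type]
  apply Finset.sum_congr rfl; intro i _
  rw [Fin.sum_univ_two]
  have h0 : pairEquiv n (i, 0) = i0 i := by apply Fin.ext; simp [pairEquiv, i0]
  have h1 : pairEquiv n (i, 1) = i1 i := by apply Fin.ext; simp [pairEquiv, i1]
  rw [h0, h1]

end Basic

section Linear
variable {n : ℕ}

/-- An additive map to `ZMod 2` is given by pairing with some vector. -/
lemma lin_of_additive (g : V n → ZMod 2) (hadd : ∀ x y, g (x + y) = g x + g y) :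
    ∃ p : V n, ∀ x, g x = sform p x := by
  have h0 : g 0 = 0 := by
    have := hadd 0 0; simpa using this.symm
  let G : V n →+ ZMod 2 := AddMonoidHom.mk' g hadd
  refine ⟨fun j => if h : j.1 % 2 = 0 then g (Pi.single (⟨j.1 + 1, by have := j.isLt; omega⟩ : Fin (2*n)) 1)
      else g (Pi.single (⟨j.1 - 1, by have := j.isLt; omega⟩ : Fin (2*n)) 1), ?_⟩
  intro x
  have hx : x = ∑ j : Fin (2*n), x j • Pi.single j (1 : ZMod 2) := by
    funext k
    rw [Finset.sum_apply]
    simp [Pi.single_apply]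
  have hsmul : ∀ (c : ZMod 2) (v : V n), g (c • v) = c * g v := by
    intro c v
    rcases zcases c with hc | hc <;> subst hc
    · simpa using h0
    · simp
  calc g x = g (∑ j : Fin (2*n), x j • Pi.single j (1 : ZMod 2)) := by rw [← hx]
    _ = ∑ j : Fin (2*n), x j * g (Pi.single j 1) := by
        rw [show g = (G : V n → ZMod 2) from rfl, map_sum]
        exact Finset.sum_congr rfl fun j _ => hsmul _ _
    _ = sform _ x := by
        rw [sum_split (fun j => x j * g (Pi.single j 1))]
        unfold sform
        apply Finset.sum_congr rfl
        intro i _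
        have e0 : (i0 i : Fin (2*n)).1 % 2 = 0 := by simp [i0, Nat.mul_mod_right]
        have e1 : ¬ ((i1 i : Fin (2*n)).1 % 2 = 0) := by simp [i1]
        simp only []
        rw [dif_pos e0, dif_neg e1]
        have h01 : (⟨(i0 i : Fin (2*n)).1 + 1, by have := (i0 i).isLt; omega⟩ : Fin (2*n)) = i1 i := by
          apply Fin.ext; simp [i0, i1]
        have h10 : (⟨(i1 i : Fin (2*n)).1 - 1, by have := (i1 i).isLt; omega⟩ : Fin (2*n)) = i0 i := by
          apply Fin.ext; simp [i0, i1]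
        rw [h01, h10]
        ring

end Linear

section Quad
variable {n : ℕ}

lemma sform_single_pair (hn : 0 < n) :
    sform (Pi.single (i0 (⟨0, hn⟩ : Fin n)) (1:ZMod 2)) (Pi.single (i1 (⟨0, hn⟩ : Fin n)) (1:ZMod 2)) = 1 := by
  set i00 : Fin n := ⟨0, hn⟩
  unfold sform
  rw [Finset.sum_eq_single i00]
  · have ha : (i0 i00 : Fin (2*n)) ≠ i1 i00 := by
      simp [i0, i1, Fin.ext_iff]
    rw [Pi.single_eq_same, Pi.single_eq_same, Pi.single_eq_of_ne ha,
       Pi.single_eq_of_ne (Ne.symm ha)]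
    ring
  · intro i _ hi
    have hvne : i.1 ≠ i00.1 := fun h => hi (Fin.ext h)
    have v1 : (i0 i : Fin (2*n)).1 = 2 * i.1 := rfl
    have v2 : (i1 i : Fin (2*n)).1 = 2 * i.1 + 1 := rfl
    have v3 : (i0 i00 : Fin (2*n)).1 = 2 * i00.1 := rfl
    have v4 : (i1 i00 : Fin (2*n)).1 = 2 * i00.1 + 1 := rfl
    have h1 : (i0 i : Fin (2*n)) ≠ i0 i00 := by
      intro h; have := congrArg Fin.val h; omega
    have h2 : (i1 i : Fin (2*n)) ≠ i1 i00 := by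
      intro h; have := congrArg Fin.val h; omega
    have h3 : (i0 i : Fin (2*n)) ≠ i1 i00 := by
      intro h; have := congrArg Fin.val h; omega
    have h4 : (i1 i : Fin (2*n)) ≠ i0 i00 := by
      intro h; have := congrArg Fin.val h; omega
    rw [Pi.single_eq_of_ne h1, Pi.single_eq_of_ne h2, Pi.single_eq_of_ne h4, Pi.single_eq_of_ne h3]
    ring
  · intro h
    exact absurd (Finset.mem_univ i00) h

/-- Any function vanishing at 0 and additive on perpendicular pairs is of the form
`ε•Q0 + ⟨p,·⟩`. -/
lemma quadratic_of_perp_additive (hn : 0 < n) (f : V n → ZMod 2) (h0 : f 0 = 0)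
    (hadd : ∀ x y, sform x y = 0 → f (x + y) = f x + f y) :
    ∃ (ε : ZMod 2) (p : V n), ∀ x, f x = ε * Q0 x + sform p x := by
  classical
  set β : V n → V n → ZMod 2 := fun x y => f (x + y) + f x + f y with hβdef
  have hβ0 : ∀ x y, sform x y = 0 → β x y = 0 := by
    intro x y hs
    have := hadd x y hs
    simp only [hβdef, this]
    have : ∀ a b : ZMod 2, a + b + a + b = 0 := by decide
    exact this _ _
  have hco : ∀ x y z, β x (y + z) = β (x + y) z + β x y + β y z := by
    intro x y z
    simp only [hβdef, ← add_assoc]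
    have : ∀ A B C a b c : ZMod 2, A + a + B = A + C + c + C + a + b + B + b + c := by decide
    exact this (f (x+y+z)) (f (y+z)) (f (x+y)) (f x) (f y) (f z)
  have hβsymm : ∀ x y, β x y = β y x := by
    intro x y
    simp only [hβdef, add_comm x y]
    have : ∀ A a b : ZMod 2, A + a + b = A + b + a := by decide
    exact this _ _ _
  have hβxx : ∀ x, β x x = 0 := by
    intro x
    simp only [hβdef, Vadd_self, h0]
    have : ∀ a : ZMod 2, 0 + a + a = 0 := by decide
    exact this _
  have hβ0y : ∀ y, β 0 y = 0 := by
    intro y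
    simp only [hβdef, zero_add, h0]
    have : ∀ a : ZMod 2, a + 0 + a = 0 := by decide
    exact this _
  have hM2 : ∀ x y, β x (x + y) = β x y := by
    intro x y
    have := hco x x y
    rw [Vadd_self, hβ0y, hβxx] at this
    rw [this]; ring
  have hMoveA : ∀ x y z, sform x y = 1 → sform x z = 0 → β x (y + z) = β x y := by
    have case1 : ∀ x y z : V n, sform x z = 0 → sform z y = 0 → β x (y + z) = β x y := by
      intro x y z hxz hzy
      rw [hco x y z]
      have hyz : β y z = 0 := hβ0 y z (by rw [sform_comm]; exact hzy)
      have hxyz : β (x + y) z = 0 := by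
        apply hβ0
        rw [sform_add_left, hxz]
        rw [sform_comm] at hzy
        rw [hzy]; ring
      rw [hyz, hxyz]; ring
    intro x y z hxy hxz
    rcases zcases (sform z y) with hzy | hzy
    · exact case1 x y z hxz hzy
    · set w : V n := z + x with hw
      have hxw : sform x w = 0 := by
        rw [hw, sform_add_right, hxz, sform_self]; decide
      have hwy : sform w y = 0 := by
        rw [hw, sform_add_left, hzy, hxy]; decide
      have h1 : β x (y + w) = β x y := case1 x y w hxw hwy
      have h2 : y + z = x + (y + w) := by
        rw [hw]
        funext k
        simp only [Pi.add_apply]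
        have : ∀ a b c : ZMod 2, a + b = c + (a + (b + c)) := by decide
        exact this _ _ _
      rw [h2, hM2, h1]
  have hT1 : ∀ x y y', sform x y = 1 → sform x y' = 1 → β x y = β x y' := by
    intro x y y' h1 h2
    have hs : sform x (y + y') = 0 := by
      rw [sform_add_right, h1, h2]; decide
    have := hMoveA x y (y + y') h1 hs
    have hyy : y + (y + y') = y' := by
      rw [← add_assoc, Vadd_self, zero_add]
    rw [hyy] at this
    exact this.symm
  have hT2 : ∀ x x' y, sform x y = 1 → sform x' y = 1 → β x y = β x' y := by
    intro x x' y h1 h2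
    rw [hβsymm x y, hβsymm x' y]
    exact hT1 y x x' (by rw [sform_comm]; exact h1) (by rw [sform_comm]; exact h2)
  have htrans : ∀ x y x' y', sform x y = 1 → sform x' y' = 1 → β x y = β x' y' := by
    intro x y x' y' h1 h2
    rcases zcases (sform x y') with hxy' | hxy'
    · rcases zcases (sform x' y) with hx'y | hx'y
      · have ha : sform x (y + y') = 1 := by rw [sform_add_right, h1, hxy']; decide
        have hb : sform x' (y + y') = 1 := by rw [sform_add_right, hx'y, h2]; decide
        calc β x y = β x (y + y') := hT1 x y (y + y') h1 ha
          _ = β x' (y + y') := hT2 x x' (y + y') ha hb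
          _ = β x' y' := hT1 x' (y + y') y' hb h2
      · calc β x y = β x' y := hT2 x x' y h1 hx'y
          _ = β x' y' := hT1 x' y y' hx'y h2
    · calc β x y = β x y' := hT1 x y y' h1 hxy'
        _ = β x' y' := hT2 x x' y' hxy' h2
  -- the constant ε
  set E0 : V n := Pi.single (i0 (⟨0, hn⟩ : Fin n)) 1 with hE0
  set E1 : V n := Pi.single (i1 (⟨0, hn⟩ : Fin n)) 1 with hE1
  have hE : sform E0 E1 = 1 := sform_single_pair hn
  set ε : ZMod 2 := β E0 E1 with hε
  have hβval : ∀ x y, β x y = ε * sform x y := by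
    intro x y
    rcases zcases (sform x y) with hs | hs
    · rw [hβ0 x y hs, hs, mul_zero]
    · rw [hs, mul_one, hε]
      exact htrans x y E0 E1 hs hE
  -- g := f + ε·Q0 is additive
  set g : V n → ZMod 2 := fun x => f x + ε * Q0 x with hg
  have hgadd : ∀ x y, g (x + y) = g x + g y := by
    intro x y
    have hf : f (x + y) = ε * sform x y + f x + f y := by
      have hb := hβval x y
      simp only [hβdef] at hb
      have : ∀ F a b s : ZMod 2, F + a + b = s → F = s + a + b := by decide
      exact this _ _ _ _ hb
    simp only [hg, hf, Q0_add]
    have : ∀ fx fy e q1 q2 s : ZMod 2,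
        e * s + fx + fy + e * (q1 + q2 + s) = fx + e * q1 + (fy + e * q2) := by decide
    exact this _ _ _ _ _ _
  obtain ⟨p, hp⟩ := lin_of_additive g hgadd
  refine ⟨ε, p, fun x => ?_⟩
  have := hp x
  simp only [hg] at this
  have hfin : ∀ fx e q s : ZMod 2, fx + e * q = s → fx = e * q + s := by decide
  exact hfin _ _ _ _ this

section Classify
variable {n : ℕ}

/-- The classification of geometric hyperplanes: every hyperplane is the zero set
(within `P n`) of a function `ε•Q0 + ⟨p,·⟩`. -/
lemma classify (hn : 0 < n) (H : Set (V n)) (hH : IsHyperplane H) :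
    ∃ (ε : ZMod 2) (p : V n), ∀ x : V n, x ∈ H ↔ (x ≠ 0 ∧ ε * Q0 x + sform p x = 0) := by
  classical
  set f : V n → ZMod 2 := fun x => if x = 0 then 0 else if x ∈ H then 0 else 1 with hf
  have hsub : H ⊆ P n := hH.1.1
  have hne0 : ∀ x ∈ H, x ≠ (0 : V n) := fun x hx => hsub hx
  have hfval : ∀ x : V n, x ≠ 0 → (f x = 0 ↔ x ∈ H) := by
    intro x hx
    simp only [hf, if_neg hx]
    by_cases hxH : x ∈ H
    · simp [hxH]
    · simp [hxH]
  have hf0 : f 0 = 0 := by simp [hf]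
  have hadd : ∀ x y, sform x y = 0 → f (x + y) = f x + f y := by
    intro x y hs
    by_cases hx0 : x = 0
    · subst hx0; rw [zero_add, hf0, zero_add]
    by_cases hy0 : y = 0
    · subst hy0; rw [add_zero, hf0, add_zero]
    by_cases hxy : x = y
    · subst hxy; rw [Vadd_self, hf0, zadd_self]
    -- the genuine line case
    have hxy0 : x + y ≠ 0 := by
      intro hc
      apply hxy
      have : x + y + y = 0 + y := by rw [hc]
      rwa [add_assoc, Vadd_self, add_zero, zero_add] at this
    have hl : ({x, y, x + y} : Set (V n)) ∈ Lines n :=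
      ⟨x, y, hx0, hy0, hxy, hs, rfl⟩
    have hd1 : x ≠ x + y := by
      intro hc; apply hy0
      have : x + x = x + (x + y) := by rw [← hc]
      rwa [Vadd_self, ← add_assoc, Vadd_self, zero_add, eq_comm] at this
    have hd2 : y ≠ x + y := by
      intro hc; apply hx0
      have : y + y = y + (x + y) := by rw [← hc]
      rw [Vadd_self, add_comm x y, ← add_assoc, Vadd_self, zero_add, eq_comm] at this
      exact this
    rcases hH.1.2 _ hl with h1 | h3
    · obtain ⟨a, ha⟩ := Set.ncard_eq_one.mp h1
      have hal : a ∈ ({x, y, x + y} : Set (V n)) := by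
        have : a ∈ H ∩ {x, y, x + y} := ha ▸ rfl
        exact this.2
      have hmem : ∀ z ∈ ({x, y, x + y} : Set (V n)), (z ∈ H ↔ z = a) := by
        intro z hz
        constructor
        · intro hzH
          have : z ∈ H ∩ {x, y, x + y} := ⟨hzH, hz⟩
          rw [ha] at this; exact this
        · intro hza
          have : z ∈ ({a} : Set (V n)) := hza
          rw [← ha] at this
          exact this.1
      have hxl : x ∈ ({x, y, x + y} : Set (V n)) := Or.inl rfl
      have hyl : y ∈ ({x, y, x + y} : Set (V n)) := Or.inr (Or.inl rfl)
      have hzl : x + y ∈ ({x, y, x + y} : Set (V n)) := Or.inr (Or.inr rfl)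
      simp only [hf, if_neg hx0, if_neg hy0, if_neg hxy0]
      rcases hal with hh | hh | hh
      · rw [if_pos ((hmem x hxl).mpr hh.symm),
          if_neg (fun hc => hxy (((hmem y hyl).mp hc).trans hh).symm),
          if_neg (fun hc => hd1 (((hmem _ hzl).mp hc).trans hh).symm)]
        decide
      · rw [if_pos ((hmem y hyl).mpr hh.symm),
          if_neg (fun hc => hxy (((hmem x hxl).mp hc).trans hh)),
          if_neg (fun hc => hd2 (((hmem _ hzl).mp hc).trans hh).symm)]
        decide
      · rw [if_pos ((hmem _ hzl).mpr hh.symm),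
          if_neg (fun hc => hd1 (((hmem x hxl).mp hc).trans hh)),
          if_neg (fun hc => hd2 (((hmem y hyl).mp hc).trans hh))]
        decide
    · have hxH : x ∈ H := h3 (Or.inl rfl)
      have hyH : y ∈ H := h3 (Or.inr (Or.inl rfl))
      have hzH : x + y ∈ H := h3 (Or.inr (Or.inr rfl))
      simp only [hf, if_neg hx0, if_neg hy0, if_neg hxy0, if_pos hxH, if_pos hyH, if_pos hzH]
      decide
  obtain ⟨ε, p, hform⟩ := quadratic_of_perp_additive hn f hf0 hadd
  refine ⟨ε, p, fun x => ?_⟩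
  constructor
  · intro hxH
    refine ⟨hne0 x hxH, ?_⟩
    rw [← hform x]
    exact (hfval x (hne0 x hxH)).mpr hxH
  · rintro ⟨hx0, hx⟩
    exact (hfval x hx0).mp (by rw [hform x]; exact hx)

end Classify

section Counting

/-- The sign character `ZMod 2 → ℤ`. -/
def chi (a : ZMod 2) : ℤ := if a = 0 then 1 else -1

lemma chi_add (a b : ZMod 2) : chi (a + b) = chi a * chi b := by
  revert a b; decide

/-- Extension of a vector by two extra coordinates. -/
def ext1 {n : ℕ} (x : V n) (a b : ZMod 2) : V (n + 1) := fun j =>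
  if h : j.1 < 2 * n then x ⟨j.1, h⟩ else if j.1 = 2 * n then a else b

lemma Q0_ext1 {n : ℕ} (x : V n) (a b : ZMod 2) : Q0 (ext1 x a b) = Q0 x + a * b := by
  unfold Q0
  rw [Fin.sum_univ_castSucc]
  congr 1
  · apply Finset.sum_congr rfl
    intro i _
    have e0 : ext1 x a b (i0 (Fin.castSucc i)) = x (i0 i) := by
      have hlt : (i0 (Fin.castSucc i) : Fin (2*(n+1))).1 < 2 * n := by
        have := i.isLt
        simp only [i0, Fin.coe_castSucc]
        omega
      rw [ext1, dif_pos hlt]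
      congr 1
    have e1 : ext1 x a b (i1 (Fin.castSucc i)) = x (i1 i) := by
      have hlt : (i1 (Fin.castSucc i) : Fin (2*(n+1))).1 < 2 * n := by
        have := i.isLt
        simp only [i1, Fin.coe_castSucc]
        omega
      rw [ext1, dif_pos hlt]
      congr 1
    rw [e0, e1]
  · have e0 : ext1 x a b (i0 (Fin.last n)) = a := by
      have h1 : ¬ ((i0 (Fin.last n) : Fin (2*(n+1))).1 < 2 * n) := by
        simp [i0, Fin.last]
      rw [ext1, dif_neg h1, if_pos]
      rfl
    have e1 : ext1 x a b (i1 (Fin.last n)) = b := by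
      have h1 : ¬ ((i1 (Fin.last n) : Fin (2*(n+1))).1 < 2 * n) := by
        simp [i1, Fin.last]
      rw [ext1, dif_neg h1, if_neg]
      simp [i1, Fin.last]
    rw [e0, e1]

/-- The equivalence `V n × (ZMod 2)² ≃ V (n+1)`. -/
def extEquiv (n : ℕ) : (V n × (ZMod 2 × ZMod 2)) ≃ V (n + 1) where
  toFun := fun p => ext1 p.1 p.2.1 p.2.2
  invFun := fun y => (fun i => y ⟨i.1, by have := i.isLt; omega⟩,
      y ⟨2 * n, by omega⟩, y ⟨2 * n + 1, by omega⟩)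
  left_inv := by
    rintro ⟨x, a, b⟩
    refine Prod.ext ?_ (Prod.ext ?_ ?_)
    · funext i
      have := i.isLt
      simp only [ext1]
      rw [dif_pos this]
    · show ext1 x a b ⟨2*n, by omega⟩ = a
      have h1 : ¬ ((⟨2*n, by omega⟩ : Fin (2*(n+1))).1 < 2*n) := by simp
      rw [ext1, dif_neg h1, if_pos rfl]
    · show ext1 x a b ⟨2*n+1, by omega⟩ = b
      have h1 : ¬ ((⟨2*n+1, by omega⟩ : Fin (2*(n+1))).1 < 2*n) := by simp
      have h2 : ¬ ((⟨2*n+1, by omega⟩ : Fin (2*(n+1))).1 = 2*n) := by simp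
      rw [ext1, dif_neg h1, if_neg h2]
  right_inv := by
    intro y
    funext j
    have hj := j.isLt
    simp only [ext1]
    by_cases h1 : j.1 < 2 * n
    · rw [dif_pos h1]
    · rw [dif_neg h1]
      by_cases h2 : j.1 = 2 * n
      · rw [if_pos h2]
        exact congrArg y (Fin.ext (show 2*n = j.1 from h2.symm))
      · rw [if_neg h2]
        exact congrArg y (Fin.ext (show 2*n+1 = j.1 by omega))

lemma sumChiQ0 (n : ℕ) : ∑ x : V n, chi (Q0 x) = 2 ^ n := by
  induction n with
  | zero =>
    rw [show (2:ℤ)^0 = 1 by norm_num]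
    have : ∀ x : V 0, Q0 x = 0 := by
      intro x; unfold Q0
      exact Finset.sum_of_isEmpty _
    rw [Finset.sum_congr rfl (fun x _ => by rw [this x])]
    rw [Finset.sum_const, Finset.card_univ]
    have : Fintype.card (V 0) = 1 := by
      rw [Fintype.card_fun]
      norm_num
    rw [this]; simp [chi]
  | succ m ih =>
    rw [← Fintype.sum_equiv (extEquiv m) (fun p => chi (Q0 (extEquiv m p))) (fun y => chi (Q0 y)) (fun p => rfl)]
    have : ∀ p : V m × (ZMod 2 × ZMod 2), chi (Q0 (extEquiv m p)) = chi (Q0 p.1) * chi (p.2.1 * p.2.2) := by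
      rintro ⟨x, a, b⟩
      show chi (Q0 (ext1 x a b)) = _
      rw [Q0_ext1, chi_add]
    rw [Finset.sum_congr rfl (fun p _ => this p)]
    rw [Fintype.sum_prod_type]
    have inner : ∀ x : V m, ∑ q : ZMod 2 × ZMod 2, chi (Q0 x) * chi (q.1 * q.2) = chi (Q0 x) * 2 := by
      intro x
      have h2 : ∑ q : ZMod 2 × ZMod 2, chi (q.1 * q.2) = 2 := by decide
      rw [← Finset.mul_sum, h2]
    rw [Finset.sum_congr rfl (fun x _ => inner x), ← Finset.sum_mul, ih]
    ring

end Counting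

section Bound
variable {n : ℕ}

/-- The general form of a hyperplane function. -/
def Ff {n : ℕ} (ε : ZMod 2) (p : V n) (x : V n) : ZMod 2 := ε * Q0 x + sform p x

lemma Ff_zero (ε : ZMod 2) (p : V n) : Ff ε p 0 = 0 := by
  rw [Ff, Q0_zero, sform_zero_right, mul_zero, add_zero]

lemma Ff_add (ε ε' : ZMod 2) (p p' : V n) (x : V n) :
    Ff (ε + ε') (p + p') x = Ff ε p x + Ff ε' p' x := by
  rw [Ff, Ff, Ff, sform_add_left]; ring

lemma SBound (ε : ZMod 2) (p : V n) (hne : ∃ x, Ff ε p x ≠ 0) :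
    -(2:ℤ)^n ≤ ∑ x : V n, chi (Ff ε p x) ∧ (∑ x : V n, chi (Ff ε p x)) ≤ 2^n := by
  have hpow : (0:ℤ) < 2^n := by positivity
  rcases zcases ε with hε | hε <;> subst hε
  · -- linear case: the sum is 0
    have hFf : ∀ x, Ff (0:ZMod 2) p x = sform p x := by
      intro x; rw [Ff, zero_mul, zero_add]
    obtain ⟨w, hw⟩ := hne
    have hw1 : sform p w = 1 := by
      rcases zcases (sform p w) with h | h
      · exact absurd (by rw [hFf] at hw; exact hw) (by rw [h]; simp)
      · exact h
    have hrev : ∑ x : V n, chi (sform p (x + w)) = ∑ x : V n, chi (sform p x) :=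
      Fintype.sum_equiv (Equiv.addRight w) _ _ (fun x => rfl)
    have hstep : ∀ x : V n, chi (sform p (x + w)) = - chi (sform p x) := by
      intro x
      rw [sform_add_right, hw1, chi_add]
      have : chi 1 = -1 := by decide
      rw [this]; ring
    have hzero : ∑ x : V n, chi (sform p x) = 0 := by
      have h2 : ∑ x : V n, chi (sform p x) = - ∑ x : V n, chi (sform p x) :=
        calc ∑ x : V n, chi (sform p x) = ∑ x : V n, chi (sform p (x + w)) := hrev.symm
          _ = ∑ x : V n, -chi (sform p x) := Finset.sum_congr rfl (fun x _ => hstep x)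
          _ = - ∑ x : V n, chi (sform p x) := Finset.sum_neg_distrib _
      linarith
    rw [Finset.sum_congr rfl (fun x _ => by rw [hFf x])]
    rw [hzero]
    constructor <;> linarith
  · -- quadratic case: the sum is ±2^n
    have hFf : ∀ x, Ff (1:ZMod 2) p x = Q0 (x + p) + Q0 p := by
      intro x
      rw [Ff, Q0_add, one_mul, sform_comm x p]
      have : ∀ a b s : ZMod 2, a + s = a + b + s + b := by decide
      exact this _ _ _
    rw [Finset.sum_congr rfl (fun x _ => by rw [hFf x])]
    have hrev : ∑ x : V n, chi (Q0 (x + p) + Q0 p) = ∑ y : V n, chi (Q0 y + Q0 p) :=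
      Fintype.sum_equiv (Equiv.addRight p) _ _ (fun x => rfl)
    rw [hrev]
    rw [Finset.sum_congr rfl (fun y _ => by rw [chi_add]), ← Finset.sum_mul, sumChiQ0]
    rcases zcases (Q0 p) with h | h <;> rw [h]
    · have : chi 0 = 1 := by decide
      rw [this]; constructor <;> linarith
    · have : chi 1 = -1 := by decide
      rw [this]; constructor <;> linarith

end Bound

section Count
variable {n : ℕ}

lemma count_main (hn : 3 ≤ n) (εa εb εc : ZMod 2) (pa pb pc : V n)
    (hA : ∃ x, Ff εa pa x ≠ 0) (hB : ∃ x, Ff εb pb x ≠ 0) (hC : ∃ x, Ff εc pc x ≠ 0)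
    (hAB : ∃ x, Ff (εa + εb) (pa + pb) x ≠ 0)
    (hAC : ∃ x, Ff (εa + εc) (pa + pc) x ≠ 0)
    (hBC : ∃ x, Ff (εb + εc) (pb + pc) x ≠ 0)
    (hABC : ∃ x, Ff (εa + εb + εc) (pa + pb + pc) x ≠ 0) :
    ∃ x, Ff εa pa x = 0 ∧ Ff εb pb x = 0 ∧ Ff εc pc x ≠ 0 := by
  classical
  have key : ∀ x : V n,
      (if Ff εa pa x = 0 ∧ Ff εb pb x = 0 ∧ ¬ (Ff εc pc x = 0) then (8:ℤ) else 0)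
      = 1 + chi (Ff εa pa x) + chi (Ff εb pb x) + chi (Ff (εa+εb) (pa+pb) x)
        - chi (Ff εc pc x) - chi (Ff (εa+εc) (pa+pc) x) - chi (Ff (εb+εc) (pb+pc) x)
        - chi (Ff (εa+εb+εc) (pa+pb+pc) x) := by
    intro x
    rw [Ff_add εa εb pa pb x, Ff_add εa εc pa pc x, Ff_add εb εc pb pc x,
      Ff_add (εa+εb) εc (pa+pb) pc x, Ff_add εa εb pa pb x]
    have : ∀ a b c : ZMod 2,
        (if a = 0 ∧ b = 0 ∧ ¬ (c = 0) then (8:ℤ) else 0)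
        = 1 + chi a + chi b + chi (a+b) - chi c - chi (a+c) - chi (b+c) - chi (a+b+c) := by
      decide
    exact this _ _ _
  set T : Finset (V n) :=
    Finset.univ.filter (fun x => Ff εa pa x = 0 ∧ Ff εb pb x = 0 ∧ ¬ (Ff εc pc x = 0)) with hT
  have hsum : (8:ℤ) * T.card
      = ∑ x : V n, (1 + chi (Ff εa pa x) + chi (Ff εb pb x) + chi (Ff (εa+εb) (pa+pb) x)
        - chi (Ff εc pc x) - chi (Ff (εa+εc) (pa+pc) x) - chi (Ff (εb+εc) (pb+pc) x)
        - chi (Ff (εa+εb+εc) (pa+pb+pc) x)) := by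
    rw [← Finset.sum_congr rfl (fun x _ => key x)]
    rw [Finset.sum_ite, Finset.sum_const, Finset.sum_const_zero, add_zero, nsmul_eq_mul]
    rw [hT]
    ring
  have hexpand : (8:ℤ) * T.card
      = (Fintype.card (V n) : ℤ)
        + (∑ x : V n, chi (Ff εa pa x)) + (∑ x : V n, chi (Ff εb pb x))
        + (∑ x : V n, chi (Ff (εa+εb) (pa+pb) x))
        - (∑ x : V n, chi (Ff εc pc x)) - (∑ x : V n, chi (Ff (εa+εc) (pa+pc) x))
        - (∑ x : V n, chi (Ff (εb+εc) (pb+pc) x))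
        - (∑ x : V n, chi (Ff (εa+εb+εc) (pa+pb+pc) x)) := by
    rw [hsum]
    simp only [Finset.sum_sub_distrib, Finset.sum_add_distrib, Finset.sum_const,
      Finset.card_univ, nsmul_eq_mul, mul_one]
  have hcard : (Fintype.card (V n) : ℤ) = 2^n * 2^n := by
    have : Fintype.card (V n) = 2 ^ (2 * n) := by
      rw [Fintype.card_fun, ZMod.card, Fintype.card_fin]
    rw [this]
    push_cast
    rw [two_mul, pow_add]
  have h8 : (8:ℤ) ≤ 2^n := by
    calc (8:ℤ) = 2^3 := by norm_num
    _ ≤ 2^n := pow_le_pow_right₀ (by norm_num) hn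
  have bA := SBound εa pa hA
  have bB := SBound εb pb hB
  have bC := SBound εc pc hC
  have bAB := SBound _ _ hAB
  have bAC := SBound _ _ hAC
  have bBC := SBound _ _ hBC
  have bABC := SBound _ _ hABC
  have hpos : (0:ℤ) < 8 * T.card := by
    rw [hexpand, hcard]
    nlinarith [bA.1, bA.2, bB.1, bB.2, bC.1, bC.2, bAB.1, bAB.2, bAC.1, bAC.2,
      bBC.1, bBC.2, bABC.1, bABC.2, h8]
  have hTne : T.Nonempty := by
    rw [← Finset.card_pos]
    by_contra hc
    push_neg at hc
    interval_cases h : T.card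
    · simp at hpos
  obtain ⟨x, hx⟩ := hTne
  rw [hT, Finset.mem_filter] at hx
  exact ⟨x, hx.2.1, hx.2.2.1, hx.2.2.2⟩

end Count

theorem stmt10 (n : ℕ) (hn : 3 ≤ n) (A B C : Set (V n))
    (hA : IsHyperplane A) (hB : IsHyperplane B) (hC : IsHyperplane C)
    (hAB : A ≠ B) (hAC : A ≠ C) (hBC : B ≠ C)
    (h : A ∩ B ⊆ C) : A ∩ B = A ∩ C := by
  have hn0 : 0 < n := by omega
  obtain ⟨εa, pa, ha0⟩ := classify hn0 A hA
  obtain ⟨εb, pb, hb0⟩ := classify hn0 B hB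
  obtain ⟨εc, pc, hc0⟩ := classify hn0 C hC
  have ha : ∀ x : V n, x ∈ A ↔ x ≠ 0 ∧ Ff εa pa x = 0 := ha0
  have hb : ∀ x : V n, x ∈ B ↔ x ≠ 0 ∧ Ff εb pb x = 0 := hb0
  have hc : ∀ x : V n, x ∈ C ↔ x ≠ 0 ∧ Ff εc pc x = 0 := hc0
  have mkP : ∀ (S : Set (V n)) (ε : ZMod 2) (p : V n),
      (∀ x, x ∈ S ↔ x ≠ 0 ∧ Ff ε p x = 0) → (∀ x, Ff ε p x = 0) → S = P n := by
    intro S ε p hS hz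
    ext z
    rw [hS z]
    simp [P, hz z]
  have eqSet : ∀ (S S' : Set (V n)) (ε : ZMod 2) (p : V n) (ε' : ZMod 2) (p' : V n),
      (∀ x, x ∈ S ↔ x ≠ 0 ∧ Ff ε p x = 0) → (∀ x, x ∈ S' ↔ x ≠ 0 ∧ Ff ε' p' x = 0) →
      (∀ x, Ff (ε + ε') (p + p') x = 0) → S = S' := by
    intro S S' ε p ε' p' hS hS' hz
    ext z
    have heq : Ff ε p z = Ff ε' p' z := by
      have h1 := hz z
      rw [Ff_add] at h1
      have h2 : ∀ a b : ZMod 2, a + b = 0 → a = b := by decide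
      exact h2 _ _ h1
    rw [hS z, hS' z, heq]
  have nzA : ∃ x, Ff εa pa x ≠ 0 := by
    by_contra hcon; push_neg at hcon
    exact hA.2 (mkP A εa pa ha hcon)
  have nzB : ∃ x, Ff εb pb x ≠ 0 := by
    by_contra hcon; push_neg at hcon
    exact hB.2 (mkP B εb pb hb hcon)
  have nzC : ∃ x, Ff εc pc x ≠ 0 := by
    by_contra hcon; push_neg at hcon
    exact hC.2 (mkP C εc pc hc hcon)
  have nzAB : ∃ x, Ff (εa + εb) (pa + pb) x ≠ 0 := by
    by_contra hcon; push_neg at hcon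
    exact hAB (eqSet A B εa pa εb pb ha hb hcon)
  have nzAC : ∃ x, Ff (εa + εc) (pa + pc) x ≠ 0 := by
    by_contra hcon; push_neg at hcon
    exact hAC (eqSet A C εa pa εc pc ha hc hcon)
  have nzBC : ∃ x, Ff (εb + εc) (pb + pc) x ≠ 0 := by
    by_contra hcon; push_neg at hcon
    exact hBC (eqSet B C εb pb εc pc hb hc hcon)
  by_cases hcase : ∀ x, Ff (εa + εb + εc) (pa + pb + pc) x = 0
  · -- here `F_C = F_A + F_B` and we conclude
    have hFc : ∀ x, Ff εc pc x = Ff εa pa x + Ff εb pb x := by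
      intro x
      have h1 := hcase x
      rw [Ff_add (εa + εb) εc (pa + pb) pc, Ff_add εa εb pa pb] at h1
      have h2 : ∀ a b c : ZMod 2, a + b + c = 0 → c = a + b := by decide
      exact h2 _ _ _ h1
    ext z
    simp only [Set.mem_inter_iff]
    rw [ha z, hb z, hc z]
    constructor
    · rintro ⟨⟨hz0, hfa⟩, ⟨-, hfb⟩⟩
      exact ⟨⟨hz0, hfa⟩, ⟨hz0, by rw [hFc z, hfa, hfb, add_zero]⟩⟩
    · rintro ⟨⟨hz0, hfa⟩, ⟨-, hfc⟩⟩
      refine ⟨⟨hz0, hfa⟩, hz0, ?_⟩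
      have h3 := hFc z
      rw [hfc, hfa, zero_add] at h3
      exact h3.symm
  · push_neg at hcase
    obtain ⟨x, hx1, hx2, hx3⟩ :=
      count_main hn εa εb εc pa pb pc nzA nzB nzC nzAB nzAC nzBC hcase
    exfalso
    have hx0 : x ≠ 0 := by
      intro hcon
      exact hx3 (hcon ▸ Ff_zero εc pc)
    have hxA : x ∈ A := (ha x).mpr ⟨hx0, hx1⟩
    have hxB : x ∈ B := (hb x).mpr ⟨hx0, hx2⟩
    exact hx3 ((hc x).mp (h ⟨hxA, hxB⟩)).2
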